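/- arXiv:1206.0382 — 2 statements merged into one kernel-verified Lean document; each statement's English description precedes it below -/
import Mathlib

section
/- Suppose p ≥ 2, q ≥ 2, 2p ≤ q + 2, and (p, q) ≠ (2, 2). Then the set of nonzero lattice points ℓ ∈ ℤ² with T ∩ (T + ℓ) ≠ ∅ is exactly the six-element set {v, −v, Av + (p−1)v, −(Av + (p−1)v), Av + pv, −(Av + pv)}. -/
noncomputable section

open Matrix Topology Set Pointwise Polynomial

/-- The plane `ℝ²` with the Euclidean metric. -/
abbrev E2 : Type := EuclideanSpace ℝ (Fin 2)

/-- View a plain vector `Fin 2 → ℝ` as a point of the Euclidean plane. -/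
def toE (x : Fin 2 → ℝ) : E2 := WithLp.toLp 2 x

/-- The real matrix obtained from an integer matrix. -/
def matR (A : Matrix (Fin 2) (Fin 2) ℤ) : Matrix (Fin 2) (Fin 2) ℝ := A.map Int.cast

/-- View an integer vector as a point of the Euclidean plane. -/
def vecE (w : Fin 2 → ℤ) : E2 := toE fun i => (w i : ℝ)

/-- All complex eigenvalues of `A` have modulus greater than 1. -/
def Expanding (A : Matrix (Fin 2) (Fin 2) ℤ) : Prop :=
  ∀ z : ℂ, ((A.charpoly).map (Int.castRingHom ℂ)).IsRoot z → 1 < ‖z‖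

/-- `a` is a digit in `D = {0, 1, …, |q|-1}`. -/
def IsDigit (q a : ℤ) : Prop := 0 ≤ a ∧ a < |q|

/-- `b` belongs to the difference digit set `ΔD = D - D = {-(|q|-1), …, |q|-1}`. -/
def IsDiffDigit (q b : ℤ) : Prop := |b| ≤ |q| - 1

/-- `x = ∑_{i≥1} A^{-i} (c_{i-1} v)` (note the `0`-based indexing of `c`). -/
def SumsTo (A : Matrix (Fin 2) (Fin 2) ℤ) (v : Fin 2 → ℤ) (c : ℕ → ℤ) (x : E2) : Prop :=
  HasSum (fun i : ℕ => toE (((matR A)⁻¹ ^ (i + 1)).mulVec ((c i : ℝ) • fun j => (v j : ℝ)))) x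

/-- The self-affine tile `T = T(A, Dv)` with the consecutive collinear digit set `Dv`. -/
def Tile (A : Matrix (Fin 2) (Fin 2) ℤ) (q : ℤ) (v : Fin 2 → ℤ) : Set E2 :=
  {x | ∃ a : ℕ → ℤ, (∀ i, IsDigit q (a i)) ∧ SumsTo A v a x}

/-- `T` is homeomorphic to the closed unit disk in `ℝ²`. -/
def DiskLike (T : Set E2) : Prop :=
  Nonempty (T ≃ₜ (Metric.closedBall (0 : E2) 1 : Set E2))

/-- `{v, Av}` is a `ℤ`-basis of `ℤ²` (primitivity of the digit set). -/
def IsZBasis (A : Matrix (Fin 2) (Fin 2) ℤ) (v : Fin 2 → ℤ) : Prop :=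
  Submodule.span ℤ ({v, A.mulVec v} : Set (Fin 2 → ℤ)) = ⊤ ∧
    LinearIndependent ℤ ![v, A.mulVec v]


/-- Auxiliary integer sequence: `s 0 = 1`, `s 1 = p`, `s (n+2) = p s(n+1) - q s n`. -/
def sseq (p q : ℤ) : ℕ → ℤ
  | 0 => 1
  | 1 => p
  | (n+2) => p * sseq p q (n+1) - q * sseq p q n

lemma sseq_energy (p q : ℤ) :
    ∀ n, (sseq p q (n+1))^2 - p * sseq p q (n+1) * sseq p q n + q * (sseq p q n)^2
      = q^(n+1) := by
  intro n
  induction n with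
  | zero => simp [sseq]; ring
  | succ m ih =>
      have h : sseq p q (m+2) = p * sseq p q (m+1) - q * sseq p q m := rfl
      rw [h]
      have : q ^ (m + 1 + 1) = q * q ^ (m+1) := by ring
      rw [this, ← ih]; ring

lemma sseq_sq_le (p q : ℤ) (hcx : p^2 < 4*q) : ∀ n, (sseq p q n)^2 ≤ 4 * q^(n+1) := by
  intro n
  have hE := sseq_energy p q n
  nlinarith [sq_nonneg (2 * sseq p q (n+1) - p * sseq p q n), sq_nonneg (sseq p q n)]

/-- In the real-roots case the sequence is nonnegative. -/
lemma sseq_nonneg (p q : ℤ) (hp : 2 ≤ p) (hq : 0 < q) (hre : 4*q ≤ p^2) :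
    ∀ n, 0 ≤ sseq p q n := by
  set lam : ℝ := ((p:ℝ) + Real.sqrt ((p:ℝ)^2 - 4*q)) / 2 with hlam
  set mu : ℝ := (p:ℝ) - lam with hmu
  have hd2 : (0:ℝ) ≤ (p:ℝ)^2 - 4*q := by
    have h : ((4*q:ℤ):ℝ) ≤ ((p^2:ℤ):ℝ) := by exact_mod_cast hre
    push_cast at h; linarith
  have hsq : Real.sqrt ((p:ℝ)^2 - 4*q) ^ 2 = (p:ℝ)^2 - 4*q := Real.sq_sqrt hd2
  have hp0 : (0:ℝ) ≤ (p:ℝ) := by positivity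
  have hq0 : (0:ℝ) < (q:ℝ) := by exact_mod_cast hq
  have hsqle : Real.sqrt ((p:ℝ)^2 - 4*q) ≤ (p:ℝ) := by
    calc Real.sqrt ((p:ℝ)^2 - 4*q) ≤ Real.sqrt ((p:ℝ)^2) := by
          apply Real.sqrt_le_sqrt; linarith
      _ = (p:ℝ) := by rw [Real.sqrt_sq hp0]
  have hlam0 : 0 ≤ lam := by
    have := Real.sqrt_nonneg ((p:ℝ)^2 - 4*q)
    have hp0 : (0:ℝ) ≤ (p:ℝ) := by positivity
    rw [hlam]; linarith
  have hmu0 : 0 ≤ mu := by rw [hmu, hlam]; linarith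
  have hsum : lam + mu = (p:ℝ) := by rw [hmu]; ring
  have hprod : lam * mu = (q:ℝ) := by
    rw [hmu, hlam]; nlinarith [hsq]
  -- t n := s(n+1) - lam * s n satisfies t (n+1) = mu * t n, t 0 = mu ≥ 0
  have ht : ∀ n, (0:ℝ) ≤ (sseq p q (n+1) : ℝ) - lam * (sseq p q n : ℝ) := by
    intro n
    induction n with
    | zero =>
        simp [sseq]; linarith [hmu0, hsum]
    | succ m ih =>
        have h : sseq p q (m+2) = p * sseq p q (m+1) - q * sseq p q m := rfl
        rw [h]
        push_cast
        have key : (p:ℝ) * (sseq p q (m+1) : ℝ) - (q:ℝ) * (sseq p q m : ℝ)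
            - lam * (sseq p q (m+1) : ℝ)
            = mu * ((sseq p q (m+1) : ℝ) - lam * (sseq p q m : ℝ)) := by
          rw [← hsum, ← hprod]; ring
        rw [key]
        exact mul_nonneg hmu0 ih
  intro n
  induction n with
  | zero => simp [sseq]
  | succ m ih =>
      have h := ht m
      have : (0:ℝ) ≤ (sseq p q (m+1) : ℝ) := by
        have h2 : (0:ℝ) ≤ lam * (sseq p q m : ℝ) := by
          apply mul_nonneg hlam0; exact_mod_cast ih
        linarith
      exact_mod_cast this

lemma sseq_le_pow (p q : ℤ) (hp : 2 ≤ p) (hq : 0 < q) (hre : 4*q ≤ p^2) :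
    ∀ n, sseq p q n ≤ p ^ n := by
  have hnn := sseq_nonneg p q hp hq hre
  intro n
  induction n using Nat.strong_induction_on with
  | _ n ih =>
    match n with
    | 0 => simp [sseq]
    | 1 => simp [sseq]
    | (m+2) =>
        have h : sseq p q (m+2) = p * sseq p q (m+1) - q * sseq p q m := rfl
        rw [h]
        have h1 : sseq p q (m+1) ≤ p ^ (m+1) := ih (m+1) (by omega)
        have h2 : 0 ≤ q * sseq p q m := mul_nonneg (by omega) (hnn m)
        calc p * sseq p q (m+1) - q * sseq p q m ≤ p * p ^ (m+1) := by nlinarith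
          _ = p ^ (m+2) := by ring

/-- Key bound: `|s n| ≤ 2q (q-1)^n`. -/
lemma sseq_abs_le (p q : ℤ) (hp : 2 ≤ p) (hq3 : 3 ≤ q) (hq1 : p + 1 ≤ q) :
    ∀ n, |sseq p q n| ≤ 2 * q * (q-1)^n := by
  intro n
  rcases lt_or_ge (p^2) (4*q) with hcx | hre
  · -- complex case : s n ^2 ≤ 4 q^(n+1) ≤ (2q (q-1)^n)^2
    have h1 := sseq_sq_le p q hcx n
    have h2 : 4 * q^(n+1) ≤ (2 * q * (q-1)^n)^2 := by
      have hqn : q ^ n ≤ ((q-1)^n)^2 := by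
        have e1 : q ^ n ≤ ((q-1)^2) ^ n := by
          apply pow_le_pow_left₀ (by omega) (by nlinarith)
        have e2 : ((q-1)^2) ^ n = ((q-1)^n)^2 := by
          rw [← pow_mul, ← pow_mul, Nat.mul_comm]
        omega
      calc 4 * q^(n+1) = 4 * q * q ^ n := by ring
        _ ≤ 4 * q * ((q-1)^n)^2 := by
            apply mul_le_mul_of_nonneg_left hqn (by omega)
        _ ≤ (2*q*(q-1)^n)^2 := by nlinarith [pow_nonneg (show (0:ℤ) ≤ q-1 by omega) n, sq_nonneg ((q-1)^n)]
    have habs : |sseq p q n|^2 ≤ (2 * q * (q-1)^n)^2 := by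
      rw [sq_abs]; omega
    have h2q : (0:ℤ) ≤ 2 * q * (q-1)^n :=
      mul_nonneg (by omega) (pow_nonneg (by omega) n)
    exact abs_le_of_sq_le_sq' habs h2q |>.2
  · have hnn := sseq_nonneg p q hp (by omega) hre n
    have hle := sseq_le_pow p q hp (by omega) hre n
    rw [abs_of_nonneg hnn]
    calc sseq p q n ≤ p ^ n := hle
      _ ≤ (q-1)^n := pow_le_pow_left₀ (by omega) (by omega) n
      _ ≤ 2*q*(q-1)^n := by nlinarith [pow_nonneg (show (0:ℤ) ≤ q-1 by omega) n]

/-- Core contradiction: a bounded integer sequence satisfying the digit constraints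
cannot attain a maximum absolute value `b ≥ 2` (positive sign case). -/
lemma core_contra (p q b : ℤ) (hp2 : 2 ≤ p) (hq3 : 3 ≤ q) (hq1 : p + 1 ≤ q)
    (hpq : 2 * p ≤ q + 2) (hb : 2 ≤ b) (γ : ℕ → ℤ)
    (hbd : ∀ k, |γ k| ≤ b) (h0 : γ 0 = b)
    (hc : ∀ k, |q * γ k + p * γ (k+1) + γ (k+2)| ≤ q - 1) : False := by
  have hc0 := abs_le.mp (hc 0)
  have hc1 := abs_le.mp (hc 1)
  have hb1 := abs_le.mp (hbd 1)
  have hb2 := abs_le.mp (hbd 2)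
  have hb3 := abs_le.mp (hbd 3)
  have hb4 := abs_le.mp (hbd 4)
  rw [h0] at hc0
  -- p * γ 1 ≤ (q-1)*(1-b)
  have hkey : p * γ 1 ≤ (q-1) * (1-b) := by nlinarith [hc0.2, hb2.1]
  rcases lt_or_ge (p+1) q with hA | hBq
  · -- q ≥ p + 2 : forced alternation
    have hg1 : γ 1 = -b := by
      have h1 : p * γ 1 < p * (1 - b) := by nlinarith
      have h2 : γ 1 < 1 - b := lt_of_mul_lt_mul_left h1 (by omega)
      omega
    have hg2 : γ 2 = b := by
      have h1 : p * γ 2 ≥ (q-1)*(b-1) := by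
        rw [hg1] at hc1; nlinarith [hc1.1, hb3.2]
      have h2 : p * (b-1) < p * γ 2 := by nlinarith
      have h3 : b - 1 < γ 2 := lt_of_mul_lt_mul_left h2 (by omega)
      omega
    rw [hg1, hg2] at hc0
    nlinarith [hc0.2]
  · -- q = p + 1, and then p ≤ 3
    have hqe : q = p + 1 := le_antisymm (by omega) hq1
    have hp3 : p ≤ 3 := by omega
    have hg1 : γ 1 ≤ 1 - b := by
      have : p * γ 1 ≤ p * (1-b) := by rw [hqe] at hkey; nlinarith
      exact le_of_mul_le_mul_left this (by omega)
    have hc2 := abs_le.mp (hc 2)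
    have hb5 := abs_le.mp (hbd 5)
    simp only [Nat.reduceAdd] at hc0 hc1 hc2
    have hp3 : p ≤ 3 := by omega
    rcases (by omega : p = 2 ∨ p = 3) with hpv | hpv
    · have hqv : q = 3 := by omega
      subst hpv; subst hqv
      omega
    · have hqv : q = 4 := by omega
      subst hpv; subst hqv
      omega

/-- Main combinatorial lemma: bounded solutions of the constraint have `|γ k| ≤ 1`. -/
lemma gamma_le_one (p q : ℤ) (hp2 : 2 ≤ p) (hq3 : 3 ≤ q) (hq1 : p + 1 ≤ q)
    (hpq : 2 * p ≤ q + 2) (γ : ℕ → ℤ) (N : ℕ) (hbd : ∀ k, (γ k).natAbs ≤ N)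
    (hc : ∀ k, |q * γ k + p * γ (k+1) + γ (k+2)| ≤ q - 1) : ∀ k, |γ k| ≤ 1 := by
  set T : Set ℕ := {n | ∃ k, (γ k).natAbs = n} with hT
  have hne : T.Nonempty := ⟨(γ 0).natAbs, 0, rfl⟩
  have hbdd : BddAbove T := ⟨N, by rintro n ⟨k, rfl⟩; exact hbd k⟩
  have hmem : sSup T ∈ T := Nat.sSup_mem hne hbdd
  set b : ℕ := sSup T with hbdef
  have hmax : ∀ k, (γ k).natAbs ≤ b := fun k => le_csSup hbdd ⟨k, rfl⟩
  rcases le_or_gt b 1 with hble | hbgt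
  · intro k
    have h1 := hmax k
    rw [Int.abs_eq_natAbs]
    exact_mod_cast le_trans h1 hble
  · exfalso
    obtain ⟨k0, hk0⟩ := hmem
    have hbd' : ∀ j, |γ j| ≤ (b:ℤ) := by
      intro j
      rw [Int.abs_eq_natAbs]
      exact_mod_cast hmax j
    have hb2 : 2 ≤ (b:ℤ) := by exact_mod_cast hbgt
    have hcases : γ k0 = (b:ℤ) ∨ γ k0 = -(b:ℤ) := by
      have h1 := hbd' k0
      have h2 : ((γ k0).natAbs : ℤ) = (b:ℤ) := by exact_mod_cast hk0
      rcases Int.natAbs_eq (γ k0) with h3 | h3 <;> omega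
    rcases hcases with hs | hs
    · exact core_contra p q b hp2 hq3 hq1 hpq hb2 (fun j => γ (k0 + j))
        (fun j => hbd' (k0 + j)) (by simpa using hs)
        (fun j => hc (k0 + j))
    · exact core_contra p q b hp2 hq3 hq1 hpq hb2 (fun j => -γ (k0 + j))
        (fun j => by rw [abs_neg]; exact hbd' (k0 + j))
        (by simp [hs])
        (fun j => by
          rw [show q * -γ (k0 + j) + p * -γ (k0 + (j+1)) + -γ (k0 + (j+2))
              = -(q * γ (k0 + j) + p * γ (k0 + (j+1)) + γ (k0 + (j+2))) by ring, abs_neg]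
          exact hc (k0 + j))

section Setup
variable (A : Matrix (Fin 2) (Fin 2) ℤ) (p q : ℤ) (v : Fin 2 → ℤ)

lemma charpoly_coeffs (hchar : A.charpoly = X ^ 2 + C p * X + C q) :
    A.det = q := by
  have h := Matrix.det_eq_sign_charpoly_coeff A
  rw [hchar] at h
  simp [Fintype.card_fin, coeff_add, coeff_X_pow, coeff_C] at h
  simpa using h

lemma cayley (hchar : A.charpoly = X ^ 2 + C p * X + C q) :
    A * A + p • A + q • (1 : Matrix (Fin 2) (Fin 2) ℤ) = 0 := by
  have h := Matrix.aeval_self_charpoly A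
  rw [hchar] at h
  simp only [map_add, _root_.map_mul, aeval_X, aeval_C, map_pow] at h
  rw [zsmul_eq_mul, zsmul_eq_mul, mul_one]
  simpa [pow_two] using h

/-- Cast an integer vector to a real vector. -/
def castv (w : Fin 2 → ℤ) : Fin 2 → ℝ := fun i => (w i : ℝ)

lemma castv_mulVec (w : Fin 2 → ℤ) :
    castv (A *ᵥ w) = matR A *ᵥ castv w := by
  funext i
  simp [castv, Matrix.mulVec, dotProduct, matR, Fin.sum_univ_two]

lemma castv_add (w u : Fin 2 → ℤ) : castv (w + u) = castv w + castv u := by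
  funext i; simp [castv]

lemma castv_smul (z : ℤ) (w : Fin 2 → ℤ) : castv (z • w) = (z:ℝ) • castv w := by
  funext i; simp [castv]

lemma castv_sub (w u : Fin 2 → ℤ) : castv (w - u) = castv w - castv u := by
  funext i; simp [castv]

lemma hA2v (hchar : A.charpoly = X ^ 2 + C p * X + C q) :
    A *ᵥ (A *ᵥ v) = -(p • (A *ᵥ v)) - q • v := by
  have h := congrArg (fun M => M *ᵥ v) (cayley A p q hchar)
  simp only [Matrix.add_mulVec, Matrix.smul_mulVec, Matrix.one_mulVec,
    Matrix.zero_mulVec, Matrix.mulVec_mulVec] at h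
  have := h
  rw [← Matrix.mulVec_mulVec] at this
  linear_combination (norm := module) this


lemma detR (hchar : A.charpoly = X ^ 2 + C p * X + C q) : (matR A).det = (q:ℝ) := by
  have h : ((Int.castRingHom ℝ) : ℤ →+* ℝ) A.det = ((Int.castRingHom ℝ).mapMatrix A).det :=
    RingHom.map_det (Int.castRingHom ℝ) A
  rw [charpoly_coeffs A p q hchar] at h
  have h2 : (Int.castRingHom ℝ).mapMatrix A = matR A := rfl
  rw [h2] at h
  exact h.symm

lemma detRunit (hchar : A.charpoly = X ^ 2 + C p * X + C q) (hq0 : q ≠ 0) :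
    IsUnit (matR A).det := by
  rw [detR A p q hchar]
  exact isUnit_iff_ne_zero.mpr (by exact_mod_cast hq0)

lemma hBcancel (hchar : A.charpoly = X ^ 2 + C p * X + C q) (hq0 : q ≠ 0)
    (x : Fin 2 → ℝ) : (matR A)⁻¹ *ᵥ (matR A *ᵥ x) = x := by
  rw [Matrix.mulVec_mulVec, Matrix.nonsing_inv_mul _ (detRunit A p q hchar hq0),
    Matrix.one_mulVec]

/-- `A (Av) = -p (Av) - q v` over `ℝ`. -/
lemma hAwa (hchar : A.charpoly = X ^ 2 + C p * X + C q) :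
    matR A *ᵥ castv (A *ᵥ v) = (-(p:ℝ)) • castv (A *ᵥ v) + (-(q:ℝ)) • castv v := by
  rw [← castv_mulVec, hA2v A p q v hchar]
  funext i
  simp only [castv, Pi.sub_apply, Pi.neg_apply, Pi.smul_apply, Pi.add_apply, smul_eq_mul]
  push_cast
  ring

lemma hBwa (hchar : A.charpoly = X ^ 2 + C p * X + C q) (hq0 : q ≠ 0) :
    (matR A)⁻¹ *ᵥ castv (A *ᵥ v) = castv v := by
  rw [castv_mulVec, hBcancel A p q hchar hq0]

lemma hBwv (hchar : A.charpoly = X ^ 2 + C p * X + C q) (hq0 : q ≠ 0) :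
    (matR A)⁻¹ *ᵥ castv v
    = (-(p:ℝ)/q) • castv v + (-(1:ℝ)/q) • castv (A *ᵥ v) := by
  have hq0' : (q:ℝ) ≠ 0 := by exact_mod_cast hq0
  have key : matR A *ᵥ ((-(p:ℝ)/q) • castv v + (-(1:ℝ)/q) • castv (A *ᵥ v)) = castv v := by
    rw [Matrix.mulVec_add, Matrix.mulVec_smul, Matrix.mulVec_smul, ← castv_mulVec A v,
      hAwa A p q v hchar]
    funext i
    simp [castv, Matrix.mulVec, dotProduct, Fin.sum_univ_two, matR]
    field_simp
    ring
  conv_lhs => rw [← key]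
  rw [hBcancel A p q hchar hq0]

end Setup

/-- Coefficients of `B^n v` in the basis `(v, Av)`:  `B^n v = xseq n • v + yseq n • Av`. -/
def xseq (p q : ℤ) (n : ℕ) : ℝ := (-1)^n * (sseq p q n : ℝ) / (q:ℝ)^n

def yseq (p q : ℤ) : ℕ → ℝ
  | 0 => 0
  | (n+1) => -(xseq p q n) / (q:ℝ)

lemma xseq_rec (p q : ℤ) (hq0 : q ≠ 0) (n : ℕ) :
    xseq p q (n+1) = yseq p q n - ((p:ℝ)/q) * xseq p q n := by
  have hq0' : (q:ℝ) ≠ 0 := by exact_mod_cast hq0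
  match n with
  | 0 => simp [xseq, yseq, sseq]; field_simp
  | (m+1) =>
      have hrec : (sseq p q (m+2) : ℝ) = p * sseq p q (m+1) - q * sseq p q m := by
        have : sseq p q (m+2) = p * sseq p q (m+1) - q * sseq p q m := rfl
        rw [this]; push_cast; ring
      simp only [xseq, yseq]
      rw [hrec]
      field_simp
      ring

section PowDecomp
variable (A : Matrix (Fin 2) (Fin 2) ℤ) (p q : ℤ) (v : Fin 2 → ℤ)

lemma pow_mulVec_castv (hchar : A.charpoly = X ^ 2 + C p * X + C q) (hq0 : q ≠ 0) :
    ∀ n, ((matR A)⁻¹)^n *ᵥ castv v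
      = xseq p q n • castv v + yseq p q n • castv (A *ᵥ v) := by
  intro n
  induction n with
  | zero => simp [xseq, yseq, sseq]
  | succ m ih =>
      have hstep : ((matR A)⁻¹)^(m+1) = (matR A)⁻¹ * ((matR A)⁻¹)^m := by
        rw [pow_succ']
      rw [hstep, ← Matrix.mulVec_mulVec, ih, Matrix.mulVec_add, Matrix.mulVec_smul,
        Matrix.mulVec_smul, hBwv A p q v hchar hq0, hBwa A p q v hchar hq0]
      rw [xseq_rec p q hq0 m]
      show _ = (yseq p q m - (p:ℝ)/q * xseq p q m) • castv v
          + (-(xseq p q m)/(q:ℝ)) • castv (A *ᵥ v)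
      funext i
      simp [castv]
      ring

end PowDecomp

lemma xseq_abs_le (p q : ℤ) (hp : 2 ≤ p) (hq3 : 3 ≤ q) (hq1 : p + 1 ≤ q) (n : ℕ) :
    |xseq p q n| ≤ 2*(q:ℝ)*(((q:ℝ)-1)/q)^n := by
  have hq0 : (0:ℝ) < (q:ℝ) := by exact_mod_cast (by omega : (0:ℤ) < q)
  have hs := sseq_abs_le p q hp hq3 hq1 n
  have hsR : |(sseq p q n : ℝ)| ≤ 2*(q:ℝ)*((q:ℝ)-1)^n := by
    have : ((|sseq p q n| : ℤ) : ℝ) ≤ ((2*q*(q-1)^n : ℤ) : ℝ) := by exact_mod_cast hs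
    rw [Int.cast_abs] at this
    push_cast at this
    convert this using 2
  have : |xseq p q n| = |(sseq p q n : ℝ)| / (q:ℝ)^n := by
    rw [xseq, abs_div, abs_mul, abs_pow, abs_neg, abs_one, one_pow, one_mul,
      abs_pow, abs_of_pos hq0]
  rw [this, div_pow, ← mul_div_assoc]
  gcongr

lemma yseq_abs_le (p q : ℤ) (hp : 2 ≤ p) (hq3 : 3 ≤ q) (hq1 : p + 1 ≤ q) (n : ℕ) :
    |yseq p q n| ≤ 2*(q:ℝ)*(((q:ℝ)-1)/q)^n := by
  have hq0 : (0:ℝ) < (q:ℝ) := by exact_mod_cast (by omega : (0:ℤ) < q)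
  have hq1R : (1:ℝ) ≤ (q:ℝ) - 1 := by
    have : (2:ℝ) ≤ (q:ℝ) := by exact_mod_cast (by omega : (2:ℤ) ≤ q)
    linarith
  match n with
  | 0 =>
      simp [yseq]
      positivity
  | (m+1) =>
      have hx := xseq_abs_le p q hp hq3 hq1 m
      set r : ℝ := ((q:ℝ)-1)/q with hrdef
      have hr0 : (0:ℝ) ≤ r := by rw [hrdef]; positivity
      have hrm : (0:ℝ) ≤ r^m := by positivity
      have heq : |yseq p q (m+1)| = |xseq p q m| / (q:ℝ) := by
        rw [yseq, abs_div, abs_neg, abs_of_pos hq0]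
      rw [heq, pow_succ, div_le_iff₀ hq0]
      have hrq : r * (q:ℝ) = (q:ℝ)-1 := div_mul_cancel₀ _ (ne_of_gt hq0)
      calc |xseq p q m| ≤ 2*(q:ℝ)*r^m := hx
        _ = 2*(q:ℝ)*r^m * 1 := by ring
        _ ≤ 2*(q:ℝ)*r^m * ((q:ℝ)-1) :=
            mul_le_mul_of_nonneg_left hq1R (by positivity)
        _ = 2*(q:ℝ)*(r^m*r)*(q:ℝ) := by rw [← hrq]; ring

/-- The determinant of the basis `(v, Av)`. -/
def DZ (A : Matrix (Fin 2) (Fin 2) ℤ) (v : Fin 2 → ℤ) : ℤ :=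
  v 0 * (A *ᵥ v) 1 - v 1 * (A *ᵥ v) 0

lemma DZ_ne (A : Matrix (Fin 2) (Fin 2) ℤ) (v : Fin 2 → ℤ)
    (hli : LinearIndependent ℤ ![v, A *ᵥ v]) : DZ A v ≠ 0 := by
  intro h0
  rw [Fintype.linearIndependent_iff] at hli
  have key : ∀ a b : ℤ, a * v 0 + b * (A *ᵥ v) 0 = 0 → a * v 1 + b * (A *ᵥ v) 1 = 0 →
      a = 0 ∧ b = 0 := by
    intro a b h1 h2
    have := hli ![a, b] (by
      funext i
      fin_cases i
      · simpa [Fin.sum_univ_two] using h1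
      · simpa [Fin.sum_univ_two] using h2)
    exact ⟨this 0, this 1⟩
  have h1 := key ((A *ᵥ v) 1) (-(v 1)) (by simp only [DZ] at h0; linarith) (by ring)
  have h2 := key ((A *ᵥ v) 0) (-(v 0)) (by ring) (by simp only [DZ] at h0; linarith)
  have hv : v = 0 := by
    funext i
    fin_cases i
    · simpa using h2.2
    · simpa using h1.2
  have := hli ![1, 0] (by
    funext i
    fin_cases i <;> simp [Fin.sum_univ_two, hv])
  simpa using this 0

/-- Coordinate functional extracting the `Av`-coefficient. -/
def gL (A : Matrix (Fin 2) (Fin 2) ℤ) (v : Fin 2 → ℤ) : E2 →L[ℝ] ℝ :=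
  ((DZ A v : ℝ))⁻¹ • ((v 0 : ℝ) • EuclideanSpace.proj (1 : Fin 2)
    - (v 1 : ℝ) • EuclideanSpace.proj (0 : Fin 2))

/-- Coordinate functional extracting the `v`-coefficient. -/
def fL (A : Matrix (Fin 2) (Fin 2) ℤ) (v : Fin 2 → ℤ) : E2 →L[ℝ] ℝ :=
  ((DZ A v : ℝ))⁻¹ • (((A *ᵥ v) 1 : ℝ) • EuclideanSpace.proj (0 : Fin 2)
    - ((A *ᵥ v) 0 : ℝ) • EuclideanSpace.proj (1 : Fin 2))

lemma vecE_comb (A : Matrix (Fin 2) (Fin 2) ℤ) (v : Fin 2 → ℤ) (α β : ℤ) :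
    vecE (α • v + β • (A *ᵥ v)) = (α:ℝ) • vecE v + (β:ℝ) • vecE (A *ᵥ v) := by
  ext i
  fin_cases i <;> simp [vecE, toE]

lemma projE (i : Fin 2) (x : E2) : EuclideanSpace.proj i x = x i := rfl

lemma vecE_apply (w : Fin 2 → ℤ) (i : Fin 2) : vecE w i = (w i : ℝ) := rfl

section Coord
variable (A : Matrix (Fin 2) (Fin 2) ℤ) (v : Fin 2 → ℤ)

lemma gL_w0 : gL A v (vecE v) = 0 := by
  simp only [gL, ContinuousLinearMap.smul_apply, ContinuousLinearMap.sub_apply,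
    ContinuousLinearMap.coe_smul', Pi.smul_apply, projE, vecE_apply, smul_eq_mul]
  ring

lemma gL_w1 (hD : DZ A v ≠ 0) : gL A v (vecE (A *ᵥ v)) = 1 := by
  have hDR : ((DZ A v : ℝ)) ≠ 0 := by exact_mod_cast hD
  simp only [gL, ContinuousLinearMap.smul_apply, ContinuousLinearMap.sub_apply,
    ContinuousLinearMap.coe_smul', Pi.smul_apply, projE, vecE_apply, smul_eq_mul]
  rw [show (v 0:ℝ) * ((A *ᵥ v) 1 : ℝ) - (v 1:ℝ) * ((A *ᵥ v) 0:ℝ) = (DZ A v : ℝ) by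
    push_cast [DZ]; ring]
  exact inv_mul_cancel₀ hDR

lemma fL_w0 (hD : DZ A v ≠ 0) : fL A v (vecE v) = 1 := by
  have hDR : ((DZ A v : ℝ)) ≠ 0 := by exact_mod_cast hD
  simp only [fL, ContinuousLinearMap.smul_apply, ContinuousLinearMap.sub_apply,
    ContinuousLinearMap.coe_smul', Pi.smul_apply, projE, vecE_apply, smul_eq_mul]
  rw [show ((A *ᵥ v) 1:ℝ) * (v 0 : ℝ) - ((A *ᵥ v) 0:ℝ) * (v 1:ℝ) = (DZ A v : ℝ) by
    push_cast [DZ]; ring]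
  exact inv_mul_cancel₀ hDR

lemma fL_w1 : fL A v (vecE (A *ᵥ v)) = 0 := by
  simp only [fL, ContinuousLinearMap.smul_apply, ContinuousLinearMap.sub_apply,
    ContinuousLinearMap.coe_smul', Pi.smul_apply, projE, vecE_apply, smul_eq_mul]
  ring

lemma gL_vecE (hD : DZ A v ≠ 0) (α β : ℤ) :
    gL A v (vecE (α • v + β • (A *ᵥ v))) = (β:ℝ) := by
  rw [vecE_comb, map_add, _root_.map_smul, _root_.map_smul, gL_w0, gL_w1 A v hD]
  simp

lemma fL_vecE (hD : DZ A v ≠ 0) (α β : ℤ) :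
    fL A v (vecE (α • v + β • (A *ᵥ v))) = (α:ℝ) := by
  rw [vecE_comb, map_add, _root_.map_smul, _root_.map_smul, fL_w0 A v hD, fL_w1]
  simp

/-- Uniqueness of integer coordinates in the basis `(v, Av)`. -/
lemma coords_unique (hD : DZ A v ≠ 0) (α β α' β' : ℤ)
    (h : α • v + β • (A *ᵥ v) = α' • v + β' • (A *ᵥ v)) : α = α' ∧ β = β' := by
  have hg := congrArg (fun w => gL A v (vecE w)) h
  have hf := congrArg (fun w => fL A v (vecE w)) h
  rw [gL_vecE A v hD, gL_vecE A v hD] at hg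
  rw [fL_vecE A v hD, fL_vecE A v hD] at hf
  exact ⟨by exact_mod_cast hf, by exact_mod_cast hg⟩

end Coord

section Series
variable (A : Matrix (Fin 2) (Fin 2) ℤ) (p q : ℤ) (v : Fin 2 → ℤ)

/-- The `i`-th term of the expansion series with digit sequence `c`. -/
def term (c : ℕ → ℤ) (i : ℕ) : E2 :=
  toE (((matR A)⁻¹ ^ (i+1)) *ᵥ ((c i : ℝ) • castv v))

lemma sumsTo_iff (c : ℕ → ℤ) (x : E2) : SumsTo A v c x ↔ HasSum (term A v c) x :=
  Iff.rfl

lemma term_eq (c : ℕ → ℤ) (i : ℕ) :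
    term A v c i = (c i : ℝ) • toE (((matR A)⁻¹ ^ (i+1)) *ᵥ castv v) := by
  rw [term, Matrix.mulVec_smul]
  rfl

/-- Uniform constant for the geometric bound. -/
def Cst : ℝ := 2*(q:ℝ)*(‖vecE v‖ + ‖vecE (A *ᵥ v)‖)

lemma Cst_nonneg (hq3 : 3 ≤ q) : 0 ≤ Cst A q v := by
  have : (0:ℝ) ≤ (q:ℝ) := by exact_mod_cast (by omega : (0:ℤ) ≤ q)
  have h1 : (0:ℝ) ≤ ‖vecE v‖ := norm_nonneg _
  have h2 : (0:ℝ) ≤ ‖vecE (A *ᵥ v)‖ := norm_nonneg _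
  rw [Cst]; positivity

lemma norm_pow_w0_le (hchar : A.charpoly = X ^ 2 + C p * X + C q)
    (hp2 : 2 ≤ p) (hq3 : 3 ≤ q) (hq1 : p + 1 ≤ q) (n : ℕ) :
    ‖toE (((matR A)⁻¹ ^ n) *ᵥ castv v)‖ ≤ Cst A q v * (((q:ℝ)-1)/q)^n := by
  rw [pow_mulVec_castv A p q v hchar (by omega)]
  have heq : toE (xseq p q n • castv v + yseq p q n • castv (A *ᵥ v))
      = xseq p q n • vecE v + yseq p q n • vecE (A *ᵥ v) := rfl
  rw [heq]
  have hx := xseq_abs_le p q hp2 hq3 hq1 n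
  have hy := yseq_abs_le p q hp2 hq3 hq1 n
  have h1 : ‖xseq p q n • vecE v + yseq p q n • vecE (A *ᵥ v)‖
      ≤ |xseq p q n| * ‖vecE v‖ + |yseq p q n| * ‖vecE (A *ᵥ v)‖ := by
    calc ‖xseq p q n • vecE v + yseq p q n • vecE (A *ᵥ v)‖
        ≤ ‖xseq p q n • vecE v‖ + ‖yseq p q n • vecE (A *ᵥ v)‖ := norm_add_le _ _
      _ = |xseq p q n| * ‖vecE v‖ + |yseq p q n| * ‖vecE (A *ᵥ v)‖ := by
          rw [norm_smul, norm_smul, Real.norm_eq_abs, Real.norm_eq_abs]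
  apply h1.trans
  rw [Cst]
  have h2 : (0:ℝ) ≤ ‖vecE v‖ := norm_nonneg _
  have h3 : (0:ℝ) ≤ ‖vecE (A *ᵥ v)‖ := norm_nonneg _
  nlinarith [mul_le_mul_of_nonneg_right hx h2, mul_le_mul_of_nonneg_right hy h3]

lemma norm_pow_w1_le (hchar : A.charpoly = X ^ 2 + C p * X + C q)
    (hp2 : 2 ≤ p) (hq3 : 3 ≤ q) (hq1 : p + 1 ≤ q) (n : ℕ) :
    ‖toE (((matR A)⁻¹ ^ n) *ᵥ castv (A *ᵥ v))‖
      ≤ (q:ℝ) * Cst A q v * (((q:ℝ)-1)/q)^n := by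
  have hq0 : (0:ℝ) < (q:ℝ) := by exact_mod_cast (by omega : (0:ℤ) < q)
  have hC := Cst_nonneg A q v hq3
  have hr0 : (0:ℝ) ≤ ((q:ℝ)-1)/q := by
    apply div_nonneg _ (le_of_lt hq0)
    have : (1:ℝ) ≤ (q:ℝ) := by exact_mod_cast (by omega : (1:ℤ) ≤ q)
    linarith
  match n with
  | 0 =>
      simp only [pow_zero, Matrix.one_mulVec]
      have heq : ‖toE (castv (A *ᵥ v))‖ = ‖vecE (A *ᵥ v)‖ := rfl
      rw [heq, mul_one, Cst]
      have hq3R : (3:ℝ) ≤ (q:ℝ) := by exact_mod_cast (by omega : (3:ℤ) ≤ q)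
      nlinarith [mul_nonneg (show (0:ℝ) ≤ 2*(q:ℝ)^2 - 1 by nlinarith)
          (norm_nonneg (vecE (A *ᵥ v))),
        mul_nonneg (show (0:ℝ) ≤ 2*(q:ℝ)^2 by nlinarith) (norm_nonneg (vecE v))]
  | (m+1) =>
      have hstep : ((matR A)⁻¹)^(m+1) *ᵥ castv (A *ᵥ v)
          = ((matR A)⁻¹)^m *ᵥ castv v := by
        rw [pow_succ, ← Matrix.mulVec_mulVec, hBwa A p q v hchar (by omega)]
      rw [hstep]
      have h1 := norm_pow_w0_le A p q v hchar hp2 hq3 hq1 m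
      apply h1.trans
      rw [pow_succ]
      have hrm : (0:ℝ) ≤ (((q:ℝ)-1)/q)^m := by positivity
      have hrq : (((q:ℝ)-1)/q) * (q:ℝ) = (q:ℝ)-1 := div_mul_cancel₀ _ (ne_of_gt hq0)
      have h2 : (1:ℝ) ≤ ((q:ℝ)-1) := by
        have : (2:ℝ) ≤ (q:ℝ) := by exact_mod_cast (by omega : (2:ℤ) ≤ q)
        linarith
      have key : (q:ℝ) * (((q:ℝ)-1)/q) = (q:ℝ)-1 := by field_simp
      calc Cst A q v * (((q:ℝ)-1)/q)^m
          = Cst A q v * (((q:ℝ)-1)/q)^m * 1 := by ring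
        _ ≤ Cst A q v * (((q:ℝ)-1)/q)^m * ((q:ℝ)-1) :=
            mul_le_mul_of_nonneg_left h2 (mul_nonneg hC hrm)
        _ = Cst A q v * (((q:ℝ)-1)/q)^m * ((q:ℝ) * (((q:ℝ)-1)/q)) := by rw [key]
        _ = (q:ℝ) * Cst A q v * ((((q:ℝ)-1)/q)^m * (((q:ℝ)-1)/q)) := by ring

lemma norm_term_le (hchar : A.charpoly = X ^ 2 + C p * X + C q)
    (hp2 : 2 ≤ p) (hq3 : 3 ≤ q) (hq1 : p + 1 ≤ q)
    (c : ℕ → ℤ) (hc : ∀ i, |c i| ≤ q - 1) (i : ℕ) :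
    ‖term A v c i‖ ≤ (q:ℝ) * Cst A q v * (((q:ℝ)-1)/q)^(i+1) := by
  rw [term_eq, norm_smul, Real.norm_eq_abs]
  have h1 := norm_pow_w0_le A p q v hchar hp2 hq3 hq1 (i+1)
  have h2 : |(c i : ℝ)| ≤ (q:ℝ) := by
    have := hc i
    have : ((|c i| : ℤ) : ℝ) ≤ ((q - 1 : ℤ) : ℝ) := by exact_mod_cast this
    rw [Int.cast_abs] at this
    push_cast at this
    linarith
  have h3 : (0:ℝ) ≤ |(c i : ℝ)| := abs_nonneg _
  have hq0 : (0:ℝ) < (q:ℝ) := by exact_mod_cast (by omega : (0:ℤ) < q)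
  calc |(c i : ℝ)| * ‖toE (((matR A)⁻¹ ^ (i+1)) *ᵥ castv v)‖
      ≤ (q:ℝ) * (Cst A q v * (((q:ℝ)-1)/q)^(i+1)) := by
        apply mul_le_mul h2 h1 (norm_nonneg _) (le_of_lt hq0)
    _ = (q:ℝ) * Cst A q v * (((q:ℝ)-1)/q)^(i+1) := by ring

lemma summable_bnd (hq3 : 3 ≤ q) (K : ℝ) :
    Summable (fun i : ℕ => K * (((q:ℝ)-1)/q)^(i+1)) := by
  have hq0 : (0:ℝ) < (q:ℝ) := by exact_mod_cast (by omega : (0:ℤ) < q)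
  have hr0 : (0:ℝ) ≤ ((q:ℝ)-1)/q := by
    apply div_nonneg _ (le_of_lt hq0)
    have : (1:ℝ) ≤ (q:ℝ) := by exact_mod_cast (by omega : (1:ℤ) ≤ q)
    linarith
  have hr1 : ((q:ℝ)-1)/q < 1 := by
    rw [div_lt_one hq0]; linarith
  have h := (summable_geometric_of_lt_one hr0 hr1).mul_left (K * (((q:ℝ)-1)/q))
  apply h.congr
  intro i
  rw [pow_succ]
  ring

lemma summable_term (hchar : A.charpoly = X ^ 2 + C p * X + C q)
    (hp2 : 2 ≤ p) (hq3 : 3 ≤ q) (hq1 : p + 1 ≤ q)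
    (c : ℕ → ℤ) (hc : ∀ i, |c i| ≤ q - 1) : Summable (term A v c) :=
  Summable.of_norm_bounded (summable_bnd q hq3 ((q:ℝ) * Cst A q v))
    (norm_term_le A p q v hchar hp2 hq3 hq1 c hc)

/-- Uniform bound on the value of any such series. -/
def Kb : ℝ := ∑' i : ℕ, (q:ℝ) * Cst A q v * (((q:ℝ)-1)/q)^(i+1)

lemma hasSum_norm_le (hchar : A.charpoly = X ^ 2 + C p * X + C q)
    (hp2 : 2 ≤ p) (hq3 : 3 ≤ q) (hq1 : p + 1 ≤ q)
    (c : ℕ → ℤ) (hc : ∀ i, |c i| ≤ q - 1) (x : E2) (h : HasSum (term A v c) x) :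
    ‖x‖ ≤ Kb A q v := by
  have hsum := summable_term A p q v hchar hp2 hq3 hq1 c hc
  have hx : x = ∑' i, term A v c i := h.tsum_eq.symm
  rw [hx, Kb]
  have h1 : ‖∑' i, term A v c i‖ ≤ ∑' i, ‖term A v c i‖ :=
    norm_tsum_le_tsum_norm (hsum.norm)
  apply h1.trans
  apply Summable.tsum_le_tsum (norm_term_le A p q v hchar hp2 hq3 hq1 c hc) hsum.norm
    (summable_bnd q hq3 ((q:ℝ) * Cst A q v))

end Series

section Shift
variable (A : Matrix (Fin 2) (Fin 2) ℤ) (p q : ℤ) (v : Fin 2 → ℤ)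

/-- Multiplication by `A` as a continuous linear map on `E2`. -/
def Amap : E2 →L[ℝ] E2 :=
  LinearMap.toContinuousLinearMap (Matrix.toEuclideanLin (matR A))

lemma Amap_apply (x : Fin 2 → ℝ) : Amap A (toE x) = toE (matR A *ᵥ x) := rfl

lemma vecE_eq_toE_castv (m : Fin 2 → ℤ) : vecE m = toE (castv m) := rfl

lemma Amap_vecE (m : Fin 2 → ℤ) : Amap A (vecE m) = vecE (A *ᵥ m) := by
  rw [vecE_eq_toE_castv, Amap_apply, vecE_eq_toE_castv, castv_mulVec]

lemma ABpow (hchar : A.charpoly = X ^ 2 + C p * X + C q) (hq0 : q ≠ 0) (i : ℕ) :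
    matR A * ((matR A)⁻¹)^(i+1) = ((matR A)⁻¹)^i := by
  rw [pow_succ', ← mul_assoc, Matrix.mul_nonsing_inv _ (detRunit A p q hchar hq0),
    one_mul]

/-- Shifting a digit expansion. -/
lemma shift_hasSum (hchar : A.charpoly = X ^ 2 + C p * X + C q) (hq0 : q ≠ 0)
    (c : ℕ → ℤ) (x : E2) (h : HasSum (term A v c) x) :
    HasSum (term A v (fun i => c (i+1))) (Amap A x - (c 0 : ℝ) • vecE v) := by
  have h1 : HasSum (fun i => Amap A (term A v c i)) (Amap A x) :=
    (Amap A).hasSum h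
  have h2 : ∀ i, Amap A (term A v c i)
      = toE ((((matR A)⁻¹)^i) *ᵥ ((c i : ℝ) • castv v)) := by
    intro i
    rw [term, Amap_apply, Matrix.mulVec_mulVec, ABpow A p q hchar hq0]
  rw [funext h2] at h1
  set f : ℕ → E2 := fun i => toE ((((matR A)⁻¹)^i) *ᵥ ((c i : ℝ) • castv v)) with hf
  have h3 : HasSum (fun n => f (n+1)) (Amap A x - ∑ i ∈ Finset.range 1, f i) := by
    rw [hasSum_nat_add_iff 1]
    convert h1 using 1
    abel
  have h4 : ∑ i ∈ Finset.range 1, f i = (c 0 : ℝ) • vecE v := by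
    rw [Finset.sum_range_one, hf]
    simp only [pow_zero, Matrix.one_mulVec]
    rfl
  rw [h4] at h3
  exact h3

/-- Partial sums against a lattice chain. -/
lemma partial_repr (hchar : A.charpoly = X ^ 2 + C p * X + C q) (hq0 : q ≠ 0)
    (c : ℕ → ℤ) (L : ℕ → Fin 2 → ℤ)
    (hL : ∀ k, A *ᵥ (L k) = c k • v + L (k+1)) (n : ℕ) :
    vecE (L 0) = (∑ i ∈ Finset.range n, term A v c i)
      + toE (((matR A)⁻¹^n) *ᵥ castv (L n)) := by
  induction n with
  | zero =>
      simp only [Finset.range_zero, Finset.sum_empty, pow_zero, Matrix.one_mulVec,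
        zero_add]
      rfl
  | succ m ih =>
      have hstep : castv (L m) = (matR A)⁻¹ *ᵥ ((c m : ℝ) • castv v + castv (L (m+1))) := by
        have h1 : castv (A *ᵥ L m) = castv (c m • v + L (m+1)) := by rw [hL m]
        rw [castv_mulVec, castv_add, castv_smul] at h1
        rw [← h1, hBcancel A p q hchar hq0]
      have h2 : toE (((matR A)⁻¹^m) *ᵥ castv (L m))
          = term A v c m + toE (((matR A)⁻¹^(m+1)) *ᵥ castv (L (m+1))) := by
        show _ = toE _ + toE _
        rw [hstep, Matrix.mulVec_mulVec, ← pow_succ, Matrix.mulVec_add]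
        rfl
      rw [ih, Finset.sum_range_succ]
      have h3 : toE (((matR A)⁻¹^m) *ᵥ castv (L m))
          = term A v c m + toE (((matR A)⁻¹^(m+1)) *ᵥ castv (L (m+1))) := h2
      rw [h3]
      abel

end Shift

section Engines
variable (A : Matrix (Fin 2) (Fin 2) ℤ) (p q : ℤ) (v : Fin 2 → ℤ)

lemma hA2v_mulVec (hchar : A.charpoly = X ^ 2 + C p * X + C q) (α β : ℤ) :
    A *ᵥ (α • v + β • (A *ᵥ v)) = (- q * β) • v + (α - p * β) • (A *ᵥ v) := by
  rw [Matrix.mulVec_add, Matrix.mulVec_smul, Matrix.mulVec_smul, hA2v A p q v hchar]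
  funext i
  simp only [Pi.add_apply, Pi.smul_apply, Pi.sub_apply, Pi.neg_apply, smul_eq_mul]
  ring

lemma neighbor_of_gamma (hchar : A.charpoly = X ^ 2 + C p * X + C q)
    (hp2 : 2 ≤ p) (hq3 : 3 ≤ q) (hq1 : p + 1 ≤ q)
    (γ : ℕ → ℤ) (hγb : ∀ k, |γ k| ≤ 1)
    (hγc : ∀ k, |q * γ k + p * γ (k+1) + γ (k+2)| ≤ q - 1) :
    (Tile A q v ∩ (vecE ((γ 1 + p * γ 0) • v + γ 0 • (A *ᵥ v)) +ᵥ Tile A q v)).Nonempty := by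
  have hq0 : q ≠ 0 := by omega
  have hq0R : (0:ℝ) < (q:ℝ) := by exact_mod_cast (by omega : (0:ℤ) < q)
  set c : ℕ → ℤ := fun k => -(q * γ k + p * γ (k+1) + γ (k+2)) with hc
  have hcd : ∀ k, |c k| ≤ q - 1 := by
    intro k; rw [hc]; rw [abs_neg]; exact hγc k
  set L : ℕ → Fin 2 → ℤ := fun k => (γ (k+1) + p * γ k) • v + γ k • (A *ᵥ v) with hLdef
  have hL : ∀ k, A *ᵥ (L k) = c k • v + L (k+1) := by
    intro k
    rw [hLdef]
    rw [hA2v_mulVec A p q v hchar]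
    funext i
    simp only [Pi.add_apply, Pi.smul_apply, smul_eq_mul, hc]
    ring
  -- the tail tends to zero
  set r : ℝ := ((q:ℝ)-1)/q with hr
  have hr0 : (0:ℝ) ≤ r := by
    rw [hr]; apply div_nonneg _ (le_of_lt hq0R)
    have : (1:ℝ) ≤ (q:ℝ) := by exact_mod_cast (by omega : (1:ℤ) ≤ q)
    linarith
  have hr1 : r < 1 := by rw [hr, div_lt_one hq0R]; linarith
  have htail : ∀ n, ‖toE (((matR A)⁻¹^n) *ᵥ castv (L n))‖
      ≤ (((p:ℝ)+1) + q) * Cst A q v * r^n := by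
    intro n
    have hdec : toE (((matR A)⁻¹^n) *ᵥ castv (L n))
        = ((γ (n+1) + p * γ n : ℤ) : ℝ) • toE (((matR A)⁻¹^n) *ᵥ castv v)
          + ((γ n : ℤ) : ℝ) • toE (((matR A)⁻¹^n) *ᵥ castv (A *ᵥ v)) := by
      rw [hLdef]
      show toE (((matR A)⁻¹^n) *ᵥ castv ((γ (n+1) + p * γ n) • v + γ n • (A *ᵥ v))) = _
      rw [castv_add, castv_smul, castv_smul, Matrix.mulVec_add, Matrix.mulVec_smul,
        Matrix.mulVec_smul]
      rfl
    rw [hdec]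
    have h0 := norm_pow_w0_le A p q v hchar hp2 hq3 hq1 n
    have h1 := norm_pow_w1_le A p q v hchar hp2 hq3 hq1 n
    have ha : |((γ (n+1) + p * γ n : ℤ) : ℝ)| ≤ (p:ℝ) + 1 := by
      have e1 := hγb (n+1); have e2 := hγb n
      have : |γ (n+1) + p * γ n| ≤ p + 1 := by
        rw [abs_le] at *
        constructor <;> nlinarith [e1.1, e1.2, e2.1, e2.2]
      calc |((γ (n+1) + p * γ n : ℤ) : ℝ)| = ((|γ (n+1) + p * γ n| : ℤ) : ℝ) := by
            rw [Int.cast_abs]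
        _ ≤ (((p + 1 : ℤ)) : ℝ) := by exact_mod_cast this
        _ = (p:ℝ) + 1 := by push_cast; ring
    have hb : |((γ n : ℤ) : ℝ)| ≤ 1 := by
      calc |((γ n : ℤ) : ℝ)| = ((|γ n| : ℤ) : ℝ) := by rw [Int.cast_abs]
        _ ≤ ((1 : ℤ) : ℝ) := by exact_mod_cast hγb n
        _ = 1 := by norm_num
    calc ‖_ • toE (((matR A)⁻¹^n) *ᵥ castv v) + _ • toE (((matR A)⁻¹^n) *ᵥ castv (A *ᵥ v))‖
        ≤ |((γ (n+1) + p * γ n : ℤ) : ℝ)| * ‖toE (((matR A)⁻¹^n) *ᵥ castv v)‖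
          + |((γ n : ℤ) : ℝ)| * ‖toE (((matR A)⁻¹^n) *ᵥ castv (A *ᵥ v))‖ := by
          refine (norm_add_le _ _).trans ?_
          rw [norm_smul, norm_smul, Real.norm_eq_abs, Real.norm_eq_abs]
      _ ≤ ((p:ℝ)+1) * (Cst A q v * r^n) + 1 * ((q:ℝ) * Cst A q v * r^n) := by
          have hC := Cst_nonneg A q v hq3
          have c1 : (0:ℝ) ≤ Cst A q v * r^n := mul_nonneg hC (pow_nonneg hr0 n)
          have c2 : (0:ℝ) ≤ (q:ℝ) * Cst A q v * r^n :=
            mul_nonneg (mul_nonneg (le_of_lt hq0R) hC) (pow_nonneg hr0 n)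
          have t1 := mul_le_mul ha h0 (norm_nonneg _) (by positivity)
          have t2 := mul_le_mul hb h1 (norm_nonneg _) (by norm_num)
          linarith
      _ = (((p:ℝ)+1) + q) * Cst A q v * r^n := by ring
  have htend : Filter.Tendsto (fun n => toE (((matR A)⁻¹^n) *ᵥ castv (L n)))
      Filter.atTop (𝓝 0) := by
    apply squeeze_zero_norm htail
    have := (tendsto_pow_atTop_nhds_zero_of_lt_one hr0 hr1).const_mul
      ((((p:ℝ)+1) + q) * Cst A q v)
    simpa [mul_assoc] using this
  -- the series sums to vecE (L 0)
  have hsumm := summable_term A p q v hchar hp2 hq3 hq1 c hcd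
  have hS := hsumm.hasSum
  have hps := hS.tendsto_sum_nat
  have heqn : ∀ n, ∑ i ∈ Finset.range n, term A v c i
      = vecE (L 0) - toE (((matR A)⁻¹^n) *ᵥ castv (L n)) := by
    intro n
    have := partial_repr A p q v hchar hq0 c L hL n
    rw [this]; abel
  have hps2 : Filter.Tendsto (fun n => ∑ i ∈ Finset.range n, term A v c i)
      Filter.atTop (𝓝 (vecE (L 0))) := by
    rw [funext heqn]
    have := Filter.Tendsto.sub (tendsto_const_nhds (x := vecE (L 0))
      (f := Filter.atTop (α := ℕ))) htend
    simpa using this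
  have hSL : HasSum (term A v c) (vecE (L 0)) := by
    have : (∑' i, term A v c i) = vecE (L 0) := tendsto_nhds_unique hps hps2
    rwa [this] at hS
  -- split the digits
  set aa : ℕ → ℤ := fun k => if 0 ≤ c k then c k else 0 with haa
  set bb : ℕ → ℤ := fun k => aa k - c k with hbb
  have hqq : |q| = q := abs_of_pos (by omega)
  have haad : ∀ k, IsDigit q (aa k) := by
    intro k
    have h1 := abs_le.mp (hcd k)
    have hval : aa k = if 0 ≤ c k then c k else 0 := rfl
    constructor
    · rw [hval]; split <;> omega
    · rw [hqq, hval]; split <;> omega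
  have hbbd : ∀ k, IsDigit q (bb k) := by
    intro k
    have h1 := abs_le.mp (hcd k)
    have hval : bb k = (if 0 ≤ c k then c k else 0) - c k := rfl
    constructor
    · rw [hval]; split <;> omega
    · rw [hqq, hval]; split <;> omega
  have habs' : ∀ a : ℤ, IsDigit q a → |a| ≤ q - 1 := by
    intro a ha
    obtain ⟨h1, h2⟩ := ha
    rw [hqq] at h2
    rw [abs_of_nonneg h1]; omega
  have hsa := summable_term A p q v hchar hp2 hq3 hq1 aa (fun i => habs' _ (haad i))
  have hsb := summable_term A p q v hchar hp2 hq3 hq1 bb (fun i => habs' _ (hbbd i))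
  have hxa := hsa.hasSum
  have hxb := hsb.hasSum
  have hdiff : HasSum (term A v c) ((∑' i, term A v aa i) - (∑' i, term A v bb i)) := by
    have h := hxa.sub hxb
    have hfun : (fun i => term A v aa i - term A v bb i) = term A v c := by
      funext i
      rw [term_eq, term_eq, term_eq, ← sub_smul]
      congr 1
      have heq : aa i - bb i = c i := by rw [hbb]; ring
      exact_mod_cast congrArg (Int.cast : ℤ → ℝ) heq
    rwa [hfun] at h
  have hval : (∑' i, term A v aa i) - (∑' i, term A v bb i) = vecE (L 0) :=
    hdiff.unique hSL
  refine ⟨∑' i, term A v aa i, ⟨aa, haad, hxa⟩, ?_⟩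
  refine Set.mem_vadd_set.mpr ⟨∑' i, term A v bb i, ⟨bb, hbbd, hxb⟩, ?_⟩
  show vecE (L 0) + (∑' i, term A v bb i) = ∑' i, term A v aa i
  rw [← hval]
  abel

end Engines

lemma vecE_sub (m n : Fin 2 → ℤ) : vecE (m - n) = vecE m - vecE n := by
  ext i; simp [vecE, toE]

lemma vecE_smul (z : ℤ) (m : Fin 2 → ℤ) : vecE (z • m) = (z:ℝ) • vecE m := by
  ext i; simp [vecE, toE]

section Forward
variable (A : Matrix (Fin 2) (Fin 2) ℤ) (p q : ℤ) (v : Fin 2 → ℤ)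

lemma repr_coords (hchar : A.charpoly = X ^ 2 + C p * X + C q)
    (hp2 : 2 ≤ p) (hq3 : 3 ≤ q) (hq1 : p + 1 ≤ q) (hpq : 2 * p ≤ q + 2)
    (hspan : Submodule.span ℤ ({v, A *ᵥ v} : Set (Fin 2 → ℤ)) = ⊤)
    (hD : DZ A v ≠ 0)
    (ℓ : Fin 2 → ℤ) (c : ℕ → ℤ) (hc : ∀ i, |c i| ≤ q - 1)
    (h : HasSum (term A v c) (vecE ℓ)) :
    ∃ β0 β1 : ℤ, |β0| ≤ 1 ∧ |β1| ≤ 1 ∧ (β0 = 1 → β1 ≤ 0) ∧ (β0 = -1 → 0 ≤ β1) ∧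
      ℓ = (β1 + p * β0) • v + β0 • (A *ᵥ v) := by
  have hq0 : q ≠ 0 := by omega
  set L : ℕ → Fin 2 → ℤ := fun k => Nat.rec ℓ (fun k Lk => A *ᵥ Lk - c k • v) k
    with hLdef
  have hLrec : ∀ k, L (k+1) = A *ᵥ L k - c k • v := fun k => rfl
  have hLsum : ∀ k, HasSum (term A v (fun i => c (k+i))) (vecE (L k)) := by
    intro k
    induction k with
    | zero =>
        have : (fun i => c (0+i)) = c := funext fun i => by rw [Nat.zero_add]
        rw [this]
        exact h
    | succ m ih =>
        have hs := shift_hasSum A p q v hchar hq0 (fun i => c (m+i)) (vecE (L m)) ih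
        have h1 : (fun i => c (m+(i+1))) = (fun i => c ((m+1)+i)) :=
          funext fun i => congrArg c (by omega)
        rw [h1] at hs
        have h2 : Amap A (vecE (L m)) - ((c (m+0) : ℤ) : ℝ) • vecE v = vecE (L (m+1)) := by
          rw [hLrec m, Amap_vecE, vecE_sub, vecE_smul]
          norm_num
        rwa [h2] at hs
  have hnorm : ∀ k, ‖vecE (L k)‖ ≤ Kb A q v := by
    intro k
    exact hasSum_norm_le A p q v hchar hp2 hq3 hq1 (fun i => c (k+i))
      (fun i => hc (k+i)) _ (hLsum k)
  have hex : ∀ k : ℕ, ∃ a b : ℤ, L k = a • v + b • (A *ᵥ v) := by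
    intro k
    have hm : L k ∈ Submodule.span ℤ ({v, A *ᵥ v} : Set (Fin 2 → ℤ)) := by
      rw [hspan]; trivial
    obtain ⟨a, b, hab⟩ := Submodule.mem_span_pair.mp hm
    exact ⟨a, b, hab.symm⟩
  choose αz βz hab using hex
  have hrel : ∀ k, αz (k+1) = -q * βz k - c k ∧ βz (k+1) = αz k - p * βz k := by
    intro k
    have h1 : L (k+1) = (-q * βz k - c k) • v + (αz k - p * βz k) • (A *ᵥ v) := by
      rw [hLrec k]
      conv_lhs => rw [hab k]
      rw [hA2v_mulVec A p q v hchar]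
      funext i
      simp only [Pi.add_apply, Pi.sub_apply, Pi.smul_apply, smul_eq_mul]
      ring
    have h2 := (hab (k+1)).symm.trans h1
    have := coords_unique A v hD _ _ _ _ h2
    exact ⟨this.1.symm ▸ rfl, this.2.symm ▸ rfl⟩
  have hcon : ∀ k, q * βz k + p * βz (k+1) + βz (k+2) = -(c k) := by
    intro k
    have h1 := hrel k
    have h2 := hrel (k+1)
    have e1 := h1.1
    have e2 := h1.2
    have e3 := h2.2
    -- βz (k+2) = αz (k+1) - p βz (k+1), αz (k+1) = -q βz k - c k
    rw [e1] at e3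
    linarith
  have hconstr : ∀ k, |q * βz k + p * βz (k+1) + βz (k+2)| ≤ q - 1 := by
    intro k
    rw [hcon k, abs_neg]
    exact hc k
  have hβR : ∀ k, |(βz k : ℝ)| ≤ ‖gL A v‖ * Kb A q v := by
    intro k
    have h1 : ((βz k : ℤ) : ℝ) = gL A v (vecE (L k)) := by
      conv_rhs => rw [hab k]
      rw [gL_vecE A v hD]
    rw [h1]
    calc |gL A v (vecE (L k))| = ‖gL A v (vecE (L k))‖ := (Real.norm_eq_abs _).symm
      _ ≤ ‖gL A v‖ * ‖vecE (L k)‖ := ContinuousLinearMap.le_opNorm _ _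
      _ ≤ ‖gL A v‖ * Kb A q v :=
          mul_le_mul_of_nonneg_left (hnorm k) (norm_nonneg _)
  have hN : ∀ k, (βz k).natAbs ≤ ⌈‖gL A v‖ * Kb A q v⌉₊ := by
    intro k
    have h1 : ((|βz k| : ℤ) : ℝ) ≤ ((⌈‖gL A v‖ * Kb A q v⌉₊ : ℕ) : ℝ) := by
      rw [Int.cast_abs]
      exact (hβR k).trans (Nat.le_ceil _)
    have h2 : |βz k| ≤ (⌈‖gL A v‖ * Kb A q v⌉₊ : ℤ) := by exact_mod_cast h1
    rw [Int.abs_eq_natAbs] at h2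
    omega
  have hb1 := gamma_le_one p q hp2 hq3 hq1 hpq βz _ hN hconstr
  refine ⟨βz 0, βz 1, hb1 0, hb1 1, ?_, ?_, ?_⟩
  · intro h0
    have hcc := abs_le.mp (hconstr 0)
    simp only [Nat.reduceAdd, Nat.zero_add] at hcc
    have hb2 := abs_le.mp (hb1 2)
    have hbb1 := abs_le.mp (hb1 1)
    rw [h0] at hcc
    rcases (by omega : βz 1 = -1 ∨ βz 1 = 0 ∨ βz 1 = 1) with h1 | h1 | h1 <;>
      rw [h1] at hcc ⊢ <;> omega
  · intro h0
    have hcc := abs_le.mp (hconstr 0)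
    simp only [Nat.reduceAdd, Nat.zero_add] at hcc
    have hb2 := abs_le.mp (hb1 2)
    have hbb1 := abs_le.mp (hb1 1)
    rw [h0] at hcc
    rcases (by omega : βz 1 = -1 ∨ βz 1 = 0 ∨ βz 1 = 1) with h1 | h1 | h1 <;>
      rw [h1] at hcc ⊢ <;> omega
  · have h0 : ℓ = L 0 := rfl
    rw [h0]
    conv_lhs => rw [hab 0]
    have e2 := (hrel 0).2
    have : αz 0 = βz 1 + p * βz 0 := by linarith
    rw [this]

end Forward

section Final
variable (A : Matrix (Fin 2) (Fin 2) ℤ) (p q : ℤ) (v : Fin 2 → ℤ)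

lemma neighbor_mem (hchar : A.charpoly = X ^ 2 + C p * X + C q)
    (hp2 : 2 ≤ p) (hq3 : 3 ≤ q) (hq1 : p + 1 ≤ q) (hD : DZ A v ≠ 0)
    (γ : ℕ → ℤ) (hγb : ∀ k, |γ k| ≤ 1)
    (hγc : ∀ k, |q * γ k + p * γ (k+1) + γ (k+2)| ≤ q - 1)
    (hnz : ¬(γ 0 = 0 ∧ γ 1 = 0))
    (ℓ : Fin 2 → ℤ) (hℓ : ℓ = (γ 1 + p * γ 0) • v + γ 0 • (A *ᵥ v)) :
    ℓ ≠ 0 ∧ (Tile A q v ∩ (vecE ℓ +ᵥ Tile A q v)).Nonempty := by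
  constructor
  · intro h0
    have h1 : (γ 1 + p * γ 0) • v + γ 0 • (A *ᵥ v)
        = (0:ℤ) • v + (0:ℤ) • (A *ᵥ v) := by
      rw [← hℓ, h0]
      funext i
      simp
    have := coords_unique A v hD _ _ _ _ h1
    have h2 : γ 0 = 0 := this.2
    have h3 : γ 1 = 0 := by
      have := this.1
      nlinarith [this, h2]
    exact hnz ⟨h2, h3⟩
  · rw [hℓ]
    exact neighbor_of_gamma A p q v hchar hp2 hq3 hq1 γ hγb hγc

end Final

section Gammas
variable (p q : ℤ)

/-- γ for `±v`: 0, 1, -1, 1, -1, … -/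
def γv : ℕ → ℤ := fun k => if k = 0 then 0 else if k % 2 = 1 then 1 else -1

/-- γ for `±(Av + (p-1)v)`: 1, -1, 1, -1, … -/
def γa : ℕ → ℤ := fun k => if k % 2 = 0 then 1 else -1

/-- γ for `±(Av + pv)`: 1, 0, -1, 0, 1, 0, -1, 0, … -/
def γb : ℕ → ℤ := fun k => if k % 4 = 0 then 1 else if k % 4 = 2 then -1 else 0

lemma γv_bound : ∀ k, |γv k| ≤ 1 := by
  intro k; rw [γv]; split <;> [skip; split] <;> simp

lemma γa_bound : ∀ k, |γa k| ≤ 1 := by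
  intro k; rw [γa]; split <;> simp

lemma γb_bound : ∀ k, |γb k| ≤ 1 := by
  intro k; rw [γb]; split <;> [skip; split] <;> simp

lemma γv_constr (hp2 : 2 ≤ p) (hq1 : p + 1 ≤ q) :
    ∀ k, |q * γv k + p * γv (k+1) + γv (k+2)| ≤ q - 1 := by
  intro k
  rcases (by omega : k = 0 ∨ (k ≠ 0 ∧ k % 2 = 1) ∨ (k ≠ 0 ∧ k % 2 = 0)) with h | h | h
  · have e0 : γv k = 0 := by simp [γv, h]
    have e1 : γv (k+1) = 1 := by simp [γv, h]
    have e2 : γv (k+2) = -1 := by simp [γv, h]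
    rw [e0, e1, e2]
    apply abs_le.mpr
    constructor <;> omega
  · have e0 : γv k = 1 := by simp [γv, h.1, h.2]
    have e1 : γv (k+1) = -1 := by
      have h1 : (k+1) % 2 = 0 := by omega
      have h2 : k + 1 ≠ 0 := by omega
      simp [γv, h1, h2]
    have e2 : γv (k+2) = 1 := by
      have h1 : (k+2) % 2 = 1 := by omega
      have h2 : k + 2 ≠ 0 := by omega
      simp [γv, h1, h2]
    rw [e0, e1, e2]
    apply abs_le.mpr
    constructor <;> omega
  · have e0 : γv k = -1 := by
      have := h.2
      simp [γv, h.1, this]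
    have e1 : γv (k+1) = 1 := by
      have h1 : (k+1) % 2 = 1 := by omega
      have h2 : k + 1 ≠ 0 := by omega
      simp [γv, h1, h2]
    have e2 : γv (k+2) = -1 := by
      have h1 : (k+2) % 2 = 0 := by omega
      have h2 : k + 2 ≠ 0 := by omega
      simp [γv, h1, h2]
    rw [e0, e1, e2]
    apply abs_le.mpr
    constructor <;> omega

lemma γa_constr (hp2 : 2 ≤ p) (hq1 : p + 1 ≤ q) :
    ∀ k, |q * γa k + p * γa (k+1) + γa (k+2)| ≤ q - 1 := by
  intro k
  rcases (by omega : k % 2 = 0 ∨ k % 2 = 1) with h | h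
  · have e0 : γa k = 1 := by simp [γa, h]
    have e1 : γa (k+1) = -1 := by
      have h1 : (k+1) % 2 = 1 := by omega
      simp [γa, h1]
    have e2 : γa (k+2) = 1 := by
      have h1 : (k+2) % 2 = 0 := by omega
      simp [γa, h1]
    rw [e0, e1, e2]
    apply abs_le.mpr
    constructor <;> omega
  · have e0 : γa k = -1 := by simp [γa, h]
    have e1 : γa (k+1) = 1 := by
      have h1 : (k+1) % 2 = 0 := by omega
      simp [γa, h1]
    have e2 : γa (k+2) = -1 := by
      have h1 : (k+2) % 2 = 1 := by omega
      simp [γa, h1]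
    rw [e0, e1, e2]
    apply abs_le.mpr
    constructor <;> omega

lemma γb_constr (hp2 : 2 ≤ p) (hq1 : p + 1 ≤ q) :
    ∀ k, |q * γb k + p * γb (k+1) + γb (k+2)| ≤ q - 1 := by
  intro k
  have e0 : γb k = (if k % 4 = 0 then 1 else if k % 4 = 2 then -1 else 0) := rfl
  have e1 : γb (k+1) = (if (k+1) % 4 = 0 then 1 else if (k+1) % 4 = 2 then -1 else 0) := rfl
  have e2 : γb (k+2) = (if (k+2) % 4 = 0 then 1 else if (k+2) % 4 = 2 then -1 else 0) := rfl
  rcases (by omega : k % 4 = 0 ∨ k % 4 = 1 ∨ k % 4 = 2 ∨ k % 4 = 3) with h | h | h | h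
  · have g1 : (k+1) % 4 = 1 := by omega
    have g2 : (k+2) % 4 = 2 := by omega
    rw [e0, e1, e2]
    simp only [h, g1, g2]
    norm_num
    apply abs_lt.mpr
    constructor <;> omega
  · have g1 : (k+1) % 4 = 2 := by omega
    have g2 : (k+2) % 4 = 3 := by omega
    rw [e0, e1, e2]
    simp only [h, g1, g2]
    norm_num
    apply abs_lt.mpr
    constructor <;> omega
  · have g1 : (k+1) % 4 = 3 := by omega
    have g2 : (k+2) % 4 = 0 := by omega
    rw [e0, e1, e2]
    simp only [h, g1, g2]
    norm_num
    apply abs_lt.mpr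
    constructor <;> omega
  · have g1 : (k+1) % 4 = 0 := by omega
    have g2 : (k+2) % 4 = 1 := by omega
    rw [e0, e1, e2]
    simp only [h, g1, g2]
    norm_num
    apply abs_lt.mpr
    constructor <;> omega

end Gammas

/-- If `p, q ≥ 2`, `2p ≤ q + 2` and `(p, q) ≠ (2, 2)`, then `T` has
exactly the six neighbor translates `±v`, `±(Av + (p-1)v)`, `±(Av + pv)`. -/
theorem six_neighbors
    (A : Matrix (Fin 2) (Fin 2) ℤ) (p q : ℤ) (v : Fin 2 → ℤ)
    (hq : 2 ≤ |q|)
    (hchar : A.charpoly = X ^ 2 + C p * X + C q)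
    (hexp : Expanding A)
    (hbasis : IsZBasis A v)
    (hp2 : 2 ≤ p) (hq2 : 2 ≤ q) (hpq : 2 * p ≤ q + 2) (hne : ¬(p = 2 ∧ q = 2)) :
    {ℓ : Fin 2 → ℤ | ℓ ≠ 0 ∧ (Tile A q v ∩ (vecE ℓ +ᵥ Tile A q v)).Nonempty} =
      {v, -v, A.mulVec v + (p - 1) • v, -(A.mulVec v + (p - 1) • v),
        A.mulVec v + p • v, -(A.mulVec v + p • v)} := by
  obtain ⟨hspan, hli⟩ := hbasis
  have hD := DZ_ne A v hli
  have hq3 : 3 ≤ q := by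
    by_contra hlt
    push_neg at hlt
    exact hne ⟨by omega, by omega⟩
  have hq1 : p + 1 ≤ q := by omega
  have hqq : |q| = q := abs_of_pos (by omega)
  have habs' : ∀ a : ℤ, IsDigit q a → |a| ≤ q - 1 := by
    intro a ha
    obtain ⟨h1, h2⟩ := ha
    rw [hqq] at h2
    rw [abs_of_nonneg h1]; omega
  ext ℓ
  simp only [Set.mem_setOf_eq, Set.mem_insert_iff, Set.mem_singleton_iff]
  constructor
  · rintro ⟨hne0, x, hxT, hxT'⟩
    obtain ⟨a, haD, haS⟩ := hxT
    obtain ⟨y, hyT, hyx⟩ := Set.mem_vadd_set.mp hxT'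
    obtain ⟨b, hbD, hbS⟩ := hyT
    have ha' : HasSum (term A v a) x := haS
    have hb' : HasSum (term A v b) y := hbS
    have hxy : x - y = vecE ℓ := by
      rw [← hyx, vadd_eq_add]; abel
    have hcd : ∀ i, |a i - b i| ≤ q - 1 := by
      intro i
      have h1 := (haD i); have h2 := (hbD i)
      obtain ⟨h3, h4⟩ := h1; obtain ⟨h5, h6⟩ := h2
      rw [hqq] at h4 h6
      rw [abs_le]; omega
    have hdiff : HasSum (term A v (fun i => a i - b i)) (vecE ℓ) := by
      have h := ha'.sub hb'
      have hfun : (fun i => term A v a i - term A v b i)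
          = term A v (fun i => a i - b i) := by
        funext i
        rw [term_eq, term_eq, term_eq, ← sub_smul]
        congr 1
        push_cast
        ring
      rw [hfun] at h
      rwa [hxy] at h
    obtain ⟨β0, β1, hb0, hb1, hs1, hs2, heq⟩ :=
      repr_coords A p q v hchar hp2 hq3 hq1 hpq hspan hD ℓ _ hcd hdiff
    have hb0' := abs_le.mp hb0
    have hb1' := abs_le.mp hb1
    rcases (by omega : β0 = -1 ∨ β0 = 0 ∨ β0 = 1) with h0 | h0 | h0
    · have hβ1 : β1 = 0 ∨ β1 = 1 := by
        have := hs2 h0; omega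
      subst h0
      rcases hβ1 with h1 | h1 <;> subst h1
      · -- ℓ = -(Av + pv)
        right; right; right; right; right
        rw [heq]
        funext i
        simp only [Pi.add_apply, Pi.smul_apply, Pi.neg_apply, smul_eq_mul]
        ring
      · -- ℓ = -(Av + (p-1)v)
        right; right; right; left
        rw [heq]
        funext i
        simp only [Pi.add_apply, Pi.smul_apply, Pi.neg_apply, smul_eq_mul]
        ring
    · subst h0
      rcases (by omega : β1 = -1 ∨ β1 = 0 ∨ β1 = 1) with h1 | h1 | h1 <;> subst h1
      · right; left
        rw [heq]
        funext i
        simp only [Pi.add_apply, Pi.smul_apply, Pi.neg_apply, smul_eq_mul]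
        ring
      · exfalso
        apply hne0
        rw [heq]
        funext i
        simp
      · left
        rw [heq]
        funext i
        simp
    · have hβ1 : β1 = -1 ∨ β1 = 0 := by
        have := hs1 h0; omega
      subst h0
      rcases hβ1 with h1 | h1 <;> subst h1
      · -- ℓ = Av + (p-1)v
        right; right; left
        rw [heq]
        funext i
        simp only [Pi.add_apply, Pi.smul_apply, smul_eq_mul]
        ring
      · -- ℓ = Av + pv
        right; right; right; right; left
        rw [heq]
        funext i
        simp only [Pi.add_apply, Pi.smul_apply, smul_eq_mul]
        ring
  · intro h
    rcases h with h | h | h | h | h | h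
    · exact neighbor_mem A p q v hchar hp2 hq3 hq1 hD (γv) (γv_bound)
        (γv_constr p q hp2 hq1) (by simp [γv]) ℓ (by
          rw [h]; funext i; simp [γv])
    · exact neighbor_mem A p q v hchar hp2 hq3 hq1 hD (fun k => -(γv k))
        (fun k => by rw [abs_neg]; exact γv_bound k)
        (fun k => by
          rw [show q * -(γv k) + p * -(γv (k+1)) + -(γv (k+2))
              = -(q * γv k + p * γv (k+1) + γv (k+2)) by ring, abs_neg]
          exact γv_constr p q hp2 hq1 k)
        (by simp [γv]) ℓ (by
          rw [h]; funext i; simp [γv])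
    · exact neighbor_mem A p q v hchar hp2 hq3 hq1 hD (γa) (γa_bound)
        (γa_constr p q hp2 hq1) (by simp [γa]) ℓ (by
          rw [h]; funext i; simp [γa]; try ring)
    · exact neighbor_mem A p q v hchar hp2 hq3 hq1 hD (fun k => -(γa k))
        (fun k => by rw [abs_neg]; exact γa_bound k)
        (fun k => by
          rw [show q * -(γa k) + p * -(γa (k+1)) + -(γa (k+2))
              = -(q * γa k + p * γa (k+1) + γa (k+2)) by ring, abs_neg]
          exact γa_constr p q hp2 hq1 k)
        (by simp [γa]) ℓ (by
          rw [h]; funext i; simp only [γa, Pi.neg_apply, Pi.add_apply, Pi.smul_apply, smul_eq_mul]; norm_num; ring)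
    · exact neighbor_mem A p q v hchar hp2 hq3 hq1 hD (γb) (γb_bound)
        (γb_constr p q hp2 hq1) (by simp [γb]) ℓ (by
          rw [h]; funext i; simp [γb]; try ring)
    · exact neighbor_mem A p q v hchar hp2 hq3 hq1 hD (fun k => -(γb k))
        (fun k => by rw [abs_neg]; exact γb_bound k)
        (fun k => by
          rw [show q * -(γb k) + p * -(γb (k+1)) + -(γb (k+2))
              = -(q * γb k + p * γb (k+1) + γb (k+2)) by ring, abs_neg]
          exact γb_constr p q hp2 hq1 k)
        (by simp [γb]) ℓ (by
          rw [h]; funext i; simp only [γb, Pi.neg_apply, Pi.add_apply, Pi.smul_apply, smul_eq_mul]; norm_num)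
end
end

section
/- Assume T is disk-like, T + ℤ² = ℝ², and distinct translates T + m (m ∈ ℤ²) have pairwise disjoint interiors. Let ℓ, ℓ' ∈ ℤ² \ {0} with T ∩ (T + ℓ) ≠ ∅ and T ∩ (T + ℓ') ≠ ∅, and suppose ℓ' = Aℓ − b_1 v for some b_1 ∈ ΔD. Then for every j ∈ I_{b_1}, one has (T + ℓ')° + jv ⊆ A·((T + ℓ)°), where S° denotes the interior of S, I_{b_1} = {b_1, …, |q|−1} if b_1 ≥ 0 and I_{b_1} = {0, …, |q|−1+b_1} if b_1 < 0. -/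
noncomputable section

open Matrix Topology Set Pointwise Polynomial

/-- `j ∈ I_b`, where `I_b = {b, …, |q|-1}` if `b ≥ 0` and `I_b = {0, …, |q|-1+b}` if `b < 0`. -/
def MemI (q b j : ℤ) : Prop :=
  (0 ≤ b ∧ b ≤ j ∧ j ≤ |q| - 1) ∨ (b < 0 ∧ 0 ≤ j ∧ j ≤ |q| - 1 + b)


lemma toE_add (x y : Fin 2 → ℝ) : toE (x + y) = toE x + toE y := rfl

lemma osc_det (A : Matrix (Fin 2) (Fin 2) ℤ) (p q : ℤ)
    (hchar : A.charpoly = X ^ 2 + C p * X + C q) : (matR A).det = (q : ℝ) := by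
  have h : A.det = q := by
    rw [Matrix.det_eq_sign_charpoly_coeff, hchar]
    simp [coeff_add, coeff_C, coeff_X_pow]
  have h2 := RingHom.map_det (Int.castRingHom ℝ) A
  simp only [RingHom.mapMatrix_apply] at h2
  have : matR A = A.map (Int.castRingHom ℝ) := rfl
  rw [this, ← h2, h]
  rfl

def Lmap (M : Matrix (Fin 2) (Fin 2) ℝ) : E2 →ₗ[ℝ] E2 :=
  (WithLp.linearEquiv 2 ℝ (Fin 2 → ℝ)).symm.toLinearMap ∘ₗ M.mulVecLin ∘ₗ
    (WithLp.linearEquiv 2 ℝ (Fin 2 → ℝ)).toLinearMap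

lemma Lmap_apply (M : Matrix (Fin 2) (Fin 2) ℝ) (x : E2) : Lmap M x = toE (M.mulVec x) := rfl

def mkHomeo (M : Matrix (Fin 2) (Fin 2) ℝ) (hdet : IsUnit M.det) : E2 ≃ₜ E2 where
  toFun x := toE (M.mulVec x)
  invFun x := toE (M⁻¹.mulVec x)
  left_inv x := by
    show toE (M⁻¹.mulVec (M.mulVec x)) = x
    rw [Matrix.mulVec_mulVec, Matrix.nonsing_inv_mul _ hdet, Matrix.one_mulVec]; rfl
  right_inv x := by
    show toE (M.mulVec (M⁻¹.mulVec x)) = x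
    rw [Matrix.mulVec_mulVec, Matrix.mul_nonsing_inv _ hdet, Matrix.one_mulVec]; rfl
  continuous_toFun := (Lmap M).continuous_of_finiteDimensional
  continuous_invFun := (Lmap M⁻¹).continuous_of_finiteDimensional

lemma key_mem (A : Matrix (Fin 2) (Fin 2) ℤ) (q : ℤ) (v : Fin 2 → ℤ)
    (hdet : IsUnit (matR A).det) (a : ℤ) (ha : IsDigit q a) (x : E2) (hx : x ∈ Tile A q v) :
    ∃ y ∈ Tile A q v, toE ((matR A).mulVec y) = x + (a : ℝ) • vecE v := by
  classical
  set M := matR A with hM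
  obtain ⟨c, hcd, hsum⟩ := hx
  set vR : Fin 2 → ℝ := fun j => (v j : ℝ) with hvR
  set y : E2 := toE (M⁻¹.mulVec (x + (a : ℝ) • vecE v)) with hy
  refine ⟨y, ?_, ?_⟩
  · refine ⟨fun n => Nat.rec a (fun k _ => c k) n, ?_, ?_⟩
    · intro i; cases i with
      | zero => exact ha
      | succ k => exact hcd k
    · set g : ℕ → E2 := fun i =>
        toE ((M⁻¹ ^ (i + 1)).mulVec (((Nat.rec a (fun k _ => c k) i : ℤ) : ℝ) • vR)) with hg
      have hshift : (fun n => g (n + 1)) =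
          (Lmap M⁻¹) ∘ (fun i : ℕ => toE ((M⁻¹ ^ (i + 1)).mulVec ((c i : ℝ) • vR))) := by
        funext n
        show toE ((M⁻¹ ^ (n + 2)).mulVec ((c n : ℝ) • vR))
          = toE (M⁻¹.mulVec ((M⁻¹ ^ (n + 1)).mulVec ((c n : ℝ) • vR)))
        rw [Matrix.mulVec_mulVec, ← pow_succ']
      have h1 : HasSum (fun n => g (n + 1)) (Lmap M⁻¹ x) := by
        rw [hshift]
        exact hsum.map (Lmap M⁻¹).toAddMonoidHom (Lmap M⁻¹).continuous_of_finiteDimensional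
      have h2 := (hasSum_nat_add_iff (f := g) 1).mp h1
      have h3 : Lmap M⁻¹ x + ∑ i ∈ Finset.range 1, g i = y := by
        rw [Finset.sum_range_one, hy, Lmap_apply]
        show toE (M⁻¹.mulVec x) + toE ((M⁻¹ ^ 1).mulVec ((a : ℝ) • vR))
          = toE (M⁻¹.mulVec (x + (a : ℝ) • vecE v))
        rw [pow_one, ← toE_add, Matrix.mulVec_add]
        rfl
      rwa [h3] at h2
  · rw [hy]
    show toE (M.mulVec (M⁻¹.mulVec (x + (a : ℝ) • vecE v))) = _
    rw [Matrix.mulVec_mulVec, Matrix.mul_nonsing_inv _ hdet, Matrix.one_mulVec]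
    rfl

/-- open set condition inclusions. If `ℓ, ℓ'` are neighbor translates
with `ℓ' = Aℓ - b₁v`, `b₁ ∈ ΔD`, then `(T + ℓ')° + jv ⊆ A((T + ℓ)°)` for all `j ∈ I_{b₁}`. -/
theorem osc_inclusion
    (A : Matrix (Fin 2) (Fin 2) ℤ) (p q : ℤ) (v : Fin 2 → ℤ)
    (hq : 2 ≤ |q|)
    (hchar : A.charpoly = X ^ 2 + C p * X + C q)
    (hexp : Expanding A)
    (hbasis : IsZBasis A v)
    (hdisk : DiskLike (Tile A q v))
    (hcover : (⋃ m : Fin 2 → ℤ, vecE m +ᵥ Tile A q v) = Set.univ)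
    (hdisj : ∀ m m' : Fin 2 → ℤ, m ≠ m' →
      interior (vecE m +ᵥ Tile A q v) ∩ interior (vecE m' +ᵥ Tile A q v) = ∅)
    (ℓ ℓ' : Fin 2 → ℤ) (hℓ : ℓ ≠ 0) (hℓ' : ℓ' ≠ 0)
    (hnb : (Tile A q v ∩ (vecE ℓ +ᵥ Tile A q v)).Nonempty)
    (hnb' : (Tile A q v ∩ (vecE ℓ' +ᵥ Tile A q v)).Nonempty)
    (b₁ : ℤ) (hb₁ : IsDiffDigit q b₁)
    (hrel : ℓ' = A.mulVec ℓ - b₁ • v) :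
    ∀ j : ℤ, MemI q b₁ j →
      ((j : ℝ) • vecE v) +ᵥ interior (vecE ℓ' +ᵥ Tile A q v) ⊆
        (fun x : E2 => toE ((matR A).mulVec x)) '' interior (vecE ℓ +ᵥ Tile A q v) := by
  classical
  intro j hj
  set T := Tile A q v with hT
  set M := matR A with hM
  have hqz : q ≠ 0 := by intro h; rw [h] at hq; norm_num at hq
  have hdet : IsUnit M.det := by
    rw [hM, osc_det A p q hchar]
    exact isUnit_iff_ne_zero.mpr (by exact_mod_cast hqz)
  -- the digit a = j - b₁
  have ha : IsDigit q (j - b₁) := by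
    unfold IsDigit
    rcases hj with ⟨h1, h2, h3⟩ | ⟨h1, h2, h3⟩ <;>
      constructor <;> omega
  have e : E2 ≃ₜ E2 := mkHomeo M hdet
  -- the vector identity over ℝ
  have hℓ'E : vecE ℓ' = toE (M.mulVec (vecE ℓ)) - (b₁ : ℝ) • vecE v := by
    have hfun : (fun i => (ℓ' i : ℝ)) =
        M.mulVec (fun i => (ℓ i : ℝ)) - (b₁ : ℝ) • (fun i => (v i : ℝ)) := by
      funext i
      simp only [hrel, hM, matR, Matrix.mulVec, dotProduct, Matrix.map_apply,
        Pi.sub_apply, Pi.smul_apply, smul_eq_mul, Int.cast_sub, Int.cast_mul,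
        Finset.sum_apply]
      push_cast
      ring_nf
    show toE (fun i => (ℓ' i : ℝ)) = _
    rw [hfun]; rfl
  -- set inclusion
  have hmono : ((j : ℝ) • vecE v) +ᵥ (vecE ℓ' +ᵥ T) ⊆
      (fun x : E2 => toE (M.mulVec x)) '' (vecE ℓ +ᵥ T) := by
    rintro w hw
    obtain ⟨z, hz, rfl⟩ := hw
    obtain ⟨t, ht, rfl⟩ := hz
    obtain ⟨y, hyT, hy⟩ := key_mem A q v hdet (j - b₁) ha t ht
    refine ⟨vecE ℓ + y, ⟨y, hyT, rfl⟩, ?_⟩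
    show toE (M.mulVec (vecE ℓ + y)) = (j : ℝ) • vecE v +ᵥ (vecE ℓ' +ᵥ t)
    have : toE (M.mulVec (vecE ℓ + y)) = toE (M.mulVec (vecE ℓ)) + toE (M.mulVec y) := by
      rw [← toE_add, Matrix.mulVec_add]
    rw [this, hy, hℓ'E]
    show _ = (j : ℝ) • vecE v + ((toE (M.mulVec (vecE ℓ)) - (b₁ : ℝ) • vecE v) + t)
    push_cast
    rw [sub_smul]
    abel
  -- pass to interiors
  have h1 : ((j : ℝ) • vecE v) +ᵥ interior (vecE ℓ' +ᵥ T) =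
      interior (((j : ℝ) • vecE v) +ᵥ (vecE ℓ' +ᵥ T)) := (interior_vadd _ _).symm
  have h2 : (fun x : E2 => toE (M.mulVec x)) '' interior (vecE ℓ +ᵥ T) =
      interior ((fun x : E2 => toE (M.mulVec x)) '' (vecE ℓ +ᵥ T)) :=
    (mkHomeo M hdet).image_interior _
  rw [h1, h2]
  exact interior_mono hmono
end
end
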